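/- arXiv:0903.4019 — 4 statements merged into one kernel-verified Lean document; each statement's English description precedes it below -/
import Mathlib

section
/- The union A(0) = ⋃_{T ≥ 0} A(0,T) of accessible sets from the origin over all times is a vector subspace of ℝⁿ. -/
open MeasureTheory Matrix intervalIntegral

/-- The accessible set from the origin in time `T` for `Ẋ = AX + Bu`
with unconstrained integrable scalar controls. -/
def accSet (n : ℕ) (A : Matrix (Fin n) (Fin n) ℝ) (B : Fin n → ℝ) (T : ℝ) :
    Set (Fin n → ℝ) :=
  {x | ∃ u : ℝ → ℝ, IntervalIntegrable u volume 0 T ∧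
    x = ∫ s in (0:ℝ)..T, u s • (NormedSpace.exp ((T - s) • A)).mulVec B}

namespace Stmt3Aux

attribute [local instance] Matrix.linftyOpNormedRing Matrix.linftyOpNormedAlgebra

variable {n : ℕ}

lemma contF (A : Matrix (Fin n) (Fin n) ℝ) (B : Fin n → ℝ) (T : ℝ) :
    Continuous fun s : ℝ => (NormedSpace.exp ((T - s) • A)).mulVec B := by
  have h1 : Continuous fun s : ℝ => (T - s) • A :=
    (continuous_const.sub continuous_id).smul continuous_const
  exact (NormedSpace.exp_continuous.comp h1).matrix_mulVec continuous_const

lemma intInt_smul {u : ℝ → ℝ} {g : ℝ → (Fin n → ℝ)} {a b : ℝ}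
    (hu : IntervalIntegrable u volume a b) (hg : Continuous g) :
    IntervalIntegrable (fun s => u s • g s) volume a b := by
  rw [intervalIntegrable_iff] at hu ⊢
  obtain ⟨C, hC⟩ := (isCompact_uIcc (a := a) (b := b)).exists_bound_of_continuousOn hg.continuousOn
  refine hu.smul_of_top_left (memLp_top_of_bound hg.aestronglyMeasurable.restrict C ?_)
  filter_upwards [ae_restrict_mem measurableSet_uIoc] with x hx
  exact hC x (Set.uIoc_subset_uIcc hx)

lemma zero_mem' (A : Matrix (Fin n) (Fin n) ℝ) (B : Fin n → ℝ) :
    (0 : Fin n → ℝ) ∈ accSet n A B 0 :=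
  ⟨0, intervalIntegrable_const, by simp⟩

lemma add_mem' {A : Matrix (Fin n) (Fin n) ℝ} {B : Fin n → ℝ} {T : ℝ} {x y : Fin n → ℝ}
    (hx : x ∈ accSet n A B T) (hy : y ∈ accSet n A B T) : x + y ∈ accSet n A B T := by
  obtain ⟨u, hu, hxu⟩ := hx
  obtain ⟨v, hv, hyv⟩ := hy
  refine ⟨u + v, hu.add hv, ?_⟩
  have h1 := intInt_smul hu (contF A B T)
  have h2 := intInt_smul hv (contF A B T)
  simp only [Pi.add_apply, add_smul]
  rw [integral_add h1 h2, hxu, hyv]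

lemma smul_mem' {A : Matrix (Fin n) (Fin n) ℝ} {B : Fin n → ℝ} {T : ℝ} {x : Fin n → ℝ}
    (c : ℝ) (hx : x ∈ accSet n A B T) : c • x ∈ accSet n A B T := by
  obtain ⟨u, hu, hxu⟩ := hx
  refine ⟨fun s => c * u s, hu.const_mul c, ?_⟩
  simp only [← smul_smul]
  rw [intervalIntegral.integral_smul, hxu]

lemma mono' {A : Matrix (Fin n) (Fin n) ℝ} {B : Fin n → ℝ} {T1 T2 : ℝ}
    (hT1 : 0 ≤ T1) (h12 : T1 ≤ T2) : accSet n A B T1 ⊆ accSet n A B T2 := by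
  intro x hx
  obtain ⟨u, hu, hxu⟩ := hx
  set d : ℝ := T2 - T1 with hd_def
  have hd : 0 ≤ d := by simp [hd_def]; linarith
  have hdT2 : d ≤ T2 := by simp [hd_def]; linarith
  set v : ℝ → ℝ := fun s => if s ≤ d then 0 else u (s - d) with hv_def
  -- integrability of v on the two pieces
  have hv1 : IntervalIntegrable v volume 0 d := by
    apply IntervalIntegrable.congr_ae (f := fun _ => (0:ℝ)) intervalIntegrable_const
    filter_upwards [ae_restrict_mem measurableSet_uIoc] with s hs
    rw [Set.uIoc_of_le hd] at hs
    simp [hv_def, hs.2]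
  have hv2 : IntervalIntegrable v volume d T2 := by
    have h := hu.comp_sub_right d
    rw [zero_add] at h
    have hT : T1 + d = T2 := by rw [hd_def]; ring
    rw [hT] at h
    apply h.congr_ae
    filter_upwards [ae_restrict_mem measurableSet_uIoc] with s hs
    rw [Set.uIoc_of_le hdT2] at hs
    simp [hv_def, not_le.2 hs.1]
  refine ⟨v, hv1.trans hv2, ?_⟩
  have hi1 := intInt_smul hv1 (contF A B T2)
  have hi2 := intInt_smul hv2 (contF A B T2)
  rw [← integral_add_adjacent_intervals hi1 hi2]
  have e1 : (∫ s in (0:ℝ)..d, v s • (NormedSpace.exp ((T2 - s) • A)).mulVec B) = 0 := by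
    rw [integral_congr (g := fun _ => (0 : Fin n → ℝ)) ?_]
    · simp
    · intro s hs
      rw [Set.uIcc_of_le hd] at hs
      simp [hv_def, hs.2]
  have e2 : (∫ s in d..T2, v s • (NormedSpace.exp ((T2 - s) • A)).mulVec B)
      = ∫ s in d..T2, (fun t => u t • (NormedSpace.exp ((T1 - t) • A)).mulVec B) (s - d) := by
    apply intervalIntegral.integral_congr_ae
    filter_upwards [(ae_iff.2 (by simp [measure_singleton] :
        (volume : Measure ℝ) {x : ℝ | ¬ x ≠ d} = 0))] with s hs hmem
    rw [Set.uIoc_of_le hdT2] at hmem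
    have h1 : ¬ s ≤ d := not_le.2 hmem.1
    have h2 : T1 - (s - d) = T2 - s := by rw [hd_def]; ring
    simp only [hv_def, if_neg h1, h2]
  have e3 := integral_comp_sub_right (a := d) (b := T2)
    (fun t => u t • (NormedSpace.exp ((T1 - t) • A)).mulVec B) d
  rw [e1, e2, e3, zero_add, sub_self]
  have hT : T2 - d = T1 := by rw [hd_def]; ring
  rw [hT, ← hxu]

end Stmt3Aux

/-- The union `A(0) = ⋃_{T ≥ 0} A(0,T)` of the accessible sets from the origin
over all times is a vector subspace of `ℝⁿ`. -/
theorem stmt3 (n : ℕ) (A : Matrix (Fin n) (Fin n) ℝ) (B : Fin n → ℝ) :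
    ∃ S : Submodule ℝ (Fin n → ℝ),
      (S : Set (Fin n → ℝ)) = ⋃ T ∈ {T : ℝ | 0 ≤ T}, accSet n A B T := by
  refine ⟨{ carrier := ⋃ T ∈ {T : ℝ | 0 ≤ T}, accSet n A B T,
            add_mem' := ?_, zero_mem' := ?_, smul_mem' := ?_ }, rfl⟩
  · intro a b ha hb
    simp only [Set.mem_iUnion, Set.mem_setOf_eq] at ha hb ⊢
    obtain ⟨T1, hT1, ha⟩ := ha
    obtain ⟨T2, hT2, hb⟩ := hb
    refine ⟨max T1 T2, le_max_of_le_left hT1, ?_⟩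
    exact Stmt3Aux.add_mem' (Stmt3Aux.mono' hT1 (le_max_left _ _) ha)
      (Stmt3Aux.mono' hT2 (le_max_right _ _) hb)
  · simp only [Set.mem_iUnion, Set.mem_setOf_eq]
    exact ⟨0, le_refl 0, Stmt3Aux.zero_mem' A B⟩
  · intro c x hx
    simp only [Set.mem_iUnion, Set.mem_setOf_eq] at hx ⊢
    obtain ⟨T, hT, hx⟩ := hx
    exact ⟨T, hT, Stmt3Aux.smul_mem' c hx⟩
end

section
/- (Kalman condition, sufficiency) If the n×(nm) matrix C = (B | AB | ⋯ | A^{n-1}B) has rank n, then the linear system Ẋ = AX + Bu with unconstrained controls u : [0,T] → ℝᵐ is controllable: for any X₀, X₁ ∈ ℝⁿ and any T > 0 there exists a control u such that the solution with X(0)=X₀ satisfies X(T)=X₁. -/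
open MeasureTheory Matrix intervalIntegral

def kalmanMatrix (n m : ℕ) (A : Matrix (Fin n) (Fin n) ℝ)
    (B : Matrix (Fin n) (Fin m) ℝ) : Matrix (Fin n) (Fin n × Fin m) ℝ :=
  Matrix.of fun i kj => (A ^ (kj.1 : ℕ) * B) i kj.2

namespace KalmanAux

open NormedSpace Set

attribute [local instance] Matrix.linftyOpSemiNormedRing Matrix.linftyOpNormedRing
  Matrix.linftyOpNormedAlgebra

variable {n m : ℕ}

lemma cont_exp_smul (A : Matrix (Fin n) (Fin n) ℝ) :
    Continuous fun t : ℝ => exp (t • A) :=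
  exp_continuous.comp (continuous_id.smul continuous_const)

/-- the continuous linear map `M ↦ (P * M).mulVec v` -/
noncomputable def applyCLM (P : Matrix (Fin m) (Fin n) ℝ) (v : Fin n → ℝ) :
    Matrix (Fin n) (Fin n) ℝ →L[ℝ] (Fin m → ℝ) :=
  LinearMap.toContinuousLinearMap
    { toFun := fun M => (P * M).mulVec v
      map_add' := fun M N => by simp [Matrix.mul_add, Matrix.add_mulVec]
      map_smul' := fun c M => by simp [Matrix.mul_smul, Matrix.smul_mulVec] }

@[simp] lemma applyCLM_apply (P : Matrix (Fin m) (Fin n) ℝ) (v : Fin n → ℝ)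
    (M : Matrix (Fin n) (Fin n) ℝ) : applyCLM P v M = (P * M).mulVec v := rfl

lemma hasDerivAt_psi (A : Matrix (Fin n) (Fin n) ℝ) (P : Matrix (Fin m) (Fin n) ℝ)
    (v : Fin n → ℝ) (t : ℝ) :
    HasDerivAt (fun s : ℝ => (P * exp (s • A)).mulVec v)
      ((P * (A * exp (t • A))).mulVec v) t := by
  have h1 : HasDerivAt (fun s : ℝ => exp (s • A)) (A * exp (t • A)) t :=
    hasDerivAt_exp_smul_const' A t
  have := (applyCLM P v).hasFDerivAt.comp_hasDerivAt t h1
  exact this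

/-- If `Bᵀ exp(tA)ᵀ v = 0` on an interval and the Kalman matrix has full rank, then `v = 0`. -/
lemma vanish_of_kalman (A : Matrix (Fin n) (Fin n) ℝ) (B : Matrix (Fin n) (Fin m) ℝ)
    (hK : (kalmanMatrix n m A B).rank = n) (v : Fin n → ℝ) {T : ℝ} (hT : 0 < T)
    (h0 : ∀ t ∈ Ioo (0:ℝ) T, (Bᵀ * (exp (t • A))ᵀ).mulVec v = 0) : v = 0 := by
  -- convert to exp of transpose
  have hconv : ∀ t : ℝ, (exp (t • A))ᵀ = exp (t • Aᵀ) := by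
    intro t
    rw [← Matrix.exp_transpose, Matrix.transpose_smul]
  -- ψ k t = (Bᵀ * Aᵀ^k * exp (t • Aᵀ)).mulVec v vanishes on Ioo 0 T for all k
  have hpsi : ∀ k, ∀ t ∈ Ioo (0:ℝ) T, ((Bᵀ * Aᵀ ^ k) * exp (t • Aᵀ)).mulVec v = 0 := by
    intro k
    induction k with
    | zero => intro t ht; simpa [hconv t] using h0 t ht
    | succ k ih =>
      intro t ht
      have hD := hasDerivAt_psi Aᵀ (Bᵀ * Aᵀ ^ k) v t
      have heq : (fun s : ℝ => ((Bᵀ * Aᵀ ^ k) * exp (s • Aᵀ)).mulVec v)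
          =ᶠ[nhds t] fun _ => (0 : Fin m → ℝ) :=
        Filter.eventuallyEq_of_mem (Ioo_mem_nhds ht.1 ht.2) ih
      have hD0 : HasDerivAt (fun _ : ℝ => (0 : Fin m → ℝ))
          (((Bᵀ * Aᵀ ^ k) * (Aᵀ * exp (t • Aᵀ))).mulVec v) t :=
        hD.congr_of_eventuallyEq heq.symm
      have := hD0.unique (hasDerivAt_const t 0)
      have hre : (Bᵀ * Aᵀ ^ (k+1)) * exp (t • Aᵀ) = (Bᵀ * Aᵀ ^ k) * (Aᵀ * exp (t • Aᵀ)) := by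
        simp [pow_succ, Matrix.mul_assoc]
      rw [hre]; exact this
  -- evaluate at t₀ = T/2
  set t₀ : ℝ := T / 2 with ht₀
  have ht₀mem : t₀ ∈ Ioo (0:ℝ) T := ⟨by positivity, by linarith⟩
  set w : Fin n → ℝ := (exp (t₀ • Aᵀ)).mulVec v with hw
  have hwk : ∀ k : ℕ, Matrix.vecMul w (A ^ k * B) = 0 := by
    intro k
    have h1 := hpsi k t₀ ht₀mem
    have h2 : (Bᵀ * Aᵀ ^ k).mulVec w = 0 := by
      rw [hw, Matrix.mulVec_mulVec] at *
      simpa [Matrix.mul_assoc] using h1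
    have h3 : ((A ^ k * B)ᵀ).mulVec w = 0 := by
      simpa [Matrix.transpose_mul, Matrix.transpose_pow] using h2
    rwa [Matrix.mulVec_transpose] at h3
  -- the Kalman matrix has full rank, so `mulVecLin` is surjective
  have hsurj : Function.Surjective (kalmanMatrix n m A B).mulVecLin := by
    rw [← LinearMap.range_eq_top]
    apply Submodule.eq_top_of_finrank_eq
    have h1 : Module.finrank ℝ (LinearMap.range (kalmanMatrix n m A B).mulVecLin) = n := hK
    simp [h1, Module.finrank_pi]
  have hwC : Matrix.vecMul w (kalmanMatrix n m A B) = 0 := by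
    funext kj
    obtain ⟨k, j⟩ := kj
    have := congrFun (hwk (k : ℕ)) j
    simpa [Matrix.vecMul, dotProduct, kalmanMatrix] using this
  have hw0 : w = 0 := by
    rw [← dotProduct_self_eq_zero]
    obtain ⟨z, hz⟩ := hsurj w
    have hz' : (kalmanMatrix n m A B).mulVec z = w := hz
    calc w ⬝ᵥ w = w ⬝ᵥ (kalmanMatrix n m A B *ᵥ z) := by rw [hz']
      _ = (Matrix.vecMul w (kalmanMatrix n m A B)) ⬝ᵥ z := Matrix.dotProduct_mulVec _ _ _
      _ = 0 := by rw [hwC, zero_dotProduct]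
  -- invert the exponential
  have hinv : exp (-(t₀ • Aᵀ)) * exp (t₀ • Aᵀ) = 1 := by
    have hc : Commute (-(t₀ • Aᵀ)) (t₀ • Aᵀ) := (Commute.refl _).neg_left
    rw [← Matrix.exp_add_of_commute _ _ hc, neg_add_cancel, exp_zero]
  calc v = ((exp (-(t₀ • Aᵀ)) * exp (t₀ • Aᵀ))).mulVec v := by rw [hinv, Matrix.one_mulVec]
    _ = (exp (-(t₀ • Aᵀ))).mulVec w := by rw [← Matrix.mulVec_mulVec, hw]
    _ = 0 := by rw [hw0, Matrix.mulVec_zero]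

/-- the continuous linear map `x ↦ v ⬝ᵥ x` -/
noncomputable def dotCLM (v : Fin n → ℝ) : (Fin n → ℝ) →L[ℝ] ℝ :=
  LinearMap.toContinuousLinearMap
    { toFun := fun x => dotProduct v x
      map_add' := fun x y => by simp [dotProduct_add]
      map_smul' := fun c x => by simp [dotProduct_smul] }

@[simp] lemma dotCLM_apply (v x : Fin n → ℝ) : dotCLM v x = dotProduct v x := rfl

lemma controllable (A : Matrix (Fin n) (Fin n) ℝ) (B : Matrix (Fin n) (Fin m) ℝ)
    (hK : (kalmanMatrix n m A B).rank = n) (X₀ X₁ : Fin n → ℝ) {T : ℝ} (hT : 0 < T) :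
    ∃ u : ℝ → Fin m → ℝ,
      IntervalIntegrable
        (fun s => (exp ((T - s) • A)).mulVec (B.mulVec (u s))) volume 0 T ∧
      X₁ = (exp (T • A)).mulVec X₀ +
        ∫ s in (0:ℝ)..T, (exp ((T - s) • A)).mulVec (B.mulVec (u s)) := by
  set P : ℝ → Matrix (Fin n) (Fin m) ℝ := fun s => exp ((T - s) • A) * B with hP
  have hPcont : Continuous P :=
    ((cont_exp_smul A).comp (continuous_const.sub continuous_id)).matrix_mul continuous_const
  set M : ℝ → Matrix (Fin n) (Fin n) ℝ := fun s => P s * (P s)ᵀ with hM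
  have hMcont : Continuous M := hPcont.matrix_mul hPcont.matrix_transpose
  have hMentry : ∀ i j, Continuous fun s => M s i j := fun i j =>
    (continuous_apply j).comp ((continuous_apply i).comp hMcont)
  set G : Matrix (Fin n) (Fin n) ℝ := Matrix.of (fun i j => ∫ s in (0:ℝ)..T, M s i j) with hG
  have hfcont : ∀ v : Fin n → ℝ, Continuous fun s => (M s).mulVec v := fun v =>
    hMcont.matrix_mulVec continuous_const
  have hfint : ∀ v : Fin n → ℝ,
      IntervalIntegrable (fun s => (M s).mulVec v) volume 0 T := fun v =>
    (hfcont v).intervalIntegrable 0 T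
  -- `G *ᵥ v` is the integral of `(M s) *ᵥ v`
  have hGmul : ∀ v : Fin n → ℝ, G.mulVec v = ∫ s in (0:ℝ)..T, (M s).mulVec v := by
    intro v
    funext i
    have hL := (ContinuousLinearMap.proj (R := ℝ) (φ := fun _ : Fin n => ℝ)
      i).intervalIntegral_comp_comm (hfint v)
    simp only [ContinuousLinearMap.proj_apply] at hL
    rw [← hL]
    have : ∀ s : ℝ, (M s).mulVec v i = ∑ j, M s i j * v j := fun s => by
      simp [Matrix.mulVec, dotProduct]
    simp only [this]
    rw [intervalIntegral.integral_finset_sum (f := fun j s => M s i j * v j) (fun j _ =>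
      (((hMentry i j).mul continuous_const : Continuous fun s => M s i j * v j)).intervalIntegrable 0 T)]
    simp only [intervalIntegral.integral_mul_const]
    simp [hG, Matrix.mulVec, dotProduct]
  -- quadratic form identity
  have hquad : ∀ v : Fin n → ℝ, ∀ s : ℝ,
      dotProduct v ((M s).mulVec v)
        = dotProduct ((P s)ᵀ.mulVec v) ((P s)ᵀ.mulVec v) := by
    intro v s
    rw [hM, ← Matrix.mulVec_mulVec, Matrix.dotProduct_mulVec, ← Matrix.mulVec_transpose]
  have hgcont : ∀ v : Fin n → ℝ, Continuous fun s => (P s)ᵀ.mulVec v := fun v =>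
    hPcont.matrix_transpose.matrix_mulVec continuous_const
  -- G is injective
  have hGinj : Function.Injective G.mulVecLin := by
    rw [← LinearMap.ker_eq_bot, LinearMap.ker_eq_bot']
    intro v hv
    simp only [Matrix.mulVecLin_apply] at hv
    -- the quadratic integral vanishes
    have hzero : (∫ s in (0:ℝ)..T,
        dotProduct ((P s)ᵀ.mulVec v) ((P s)ᵀ.mulVec v)) = 0 := by
      have h1 := (dotCLM v).intervalIntegral_comp_comm (hfint v)
      rw [← hGmul v, hv] at h1
      simp only [dotCLM_apply, dotProduct_zero] at h1
      rw [← h1]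
      congr 1
      funext s
      exact (hquad v s).symm
    -- hence the integrand, which is continuous and nonneg, vanishes on `Ioo 0 T`
    have hnonneg : ∀ s : ℝ,
        0 ≤ dotProduct ((P s)ᵀ.mulVec v) ((P s)ᵀ.mulVec v) := fun s =>
      Finset.sum_nonneg fun j _ => mul_self_nonneg _
    have hvanish : ∀ s ∈ Ioo (0:ℝ) T, (P s)ᵀ.mulVec v = 0 := by
      intro s hs
      by_contra hne
      have hpos : 0 < dotProduct ((P s)ᵀ.mulVec v) ((P s)ᵀ.mulVec v) :=
        lt_of_le_of_ne (hnonneg s) fun h =>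
          hne (dotProduct_self_eq_zero.mp h.symm)
      have := intervalIntegral.integral_pos hT
        (((hgcont v).dotProduct (hgcont v)).continuousOn)
        (fun x _ => hnonneg x) ⟨s, ⟨hs.1.le, hs.2.le⟩, hpos⟩
      rw [hzero] at this
      exact lt_irrefl 0 this
    -- apply the rank condition
    apply vanish_of_kalman A B hK v hT
    intro t ht
    have hmem : T - t ∈ Ioo (0:ℝ) T := ⟨by linarith [ht.2], by linarith [ht.1]⟩
    have := hvanish (T - t) hmem
    rw [hP] at this
    simpa [Matrix.transpose_mul, show T - (T - t) = t by ring] using this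
  have hGsurj : Function.Surjective G.mulVecLin :=
    (LinearMap.injective_iff_surjective_of_finrank_eq_finrank rfl).mp hGinj
  obtain ⟨v, hv⟩ := hGsurj (X₁ - (exp (T • A)).mulVec X₀)
  simp only [Matrix.mulVecLin_apply] at hv
  refine ⟨fun s => Bᵀ.mulVec ((exp ((T - s) • A))ᵀ.mulVec v), ?_, ?_⟩
  · have h1 : (fun s => (exp ((T - s) • A)).mulVec
        (B.mulVec (Bᵀ.mulVec ((exp ((T - s) • A))ᵀ.mulVec v))))
        = fun s => (M s).mulVec v := by
      funext s
      simp [hM, hP, Matrix.mulVec_mulVec, Matrix.transpose_mul, Matrix.mul_assoc]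
    rw [h1]
    exact hfint v
  · have h1 : (fun s => (exp ((T - s) • A)).mulVec
        (B.mulVec (Bᵀ.mulVec ((exp ((T - s) • A))ᵀ.mulVec v))))
        = fun s => (M s).mulVec v := by
      funext s
      simp [hM, hP, Matrix.mulVec_mulVec, Matrix.transpose_mul, Matrix.mul_assoc]
    rw [h1, ← hGmul v, hv]
    abel

end KalmanAux

/-- Kalman condition, sufficiency: if `rank (B | AB | ⋯ | A^{n-1}B) = n`, then the
linear system `Ẋ = AX + Bu` with unconstrained controls is controllable: for any
`X₀, X₁` and any `T > 0` there is an integrable control steering `X₀` to `X₁` in time `T`. -/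
theorem stmt6 (n m : ℕ) (A : Matrix (Fin n) (Fin n) ℝ) (B : Matrix (Fin n) (Fin m) ℝ)
    (hK : (kalmanMatrix n m A B).rank = n) :
    ∀ X₀ X₁ : Fin n → ℝ, ∀ T : ℝ, 0 < T →
      ∃ u : ℝ → Fin m → ℝ,
        IntervalIntegrable
          (fun s => (NormedSpace.exp ((T - s) • A)).mulVec (B.mulVec (u s))) volume 0 T ∧
        X₁ = (NormedSpace.exp (T • A)).mulVec X₀ +
          ∫ s in (0:ℝ)..T, (NormedSpace.exp ((T - s) • A)).mulVec (B.mulVec (u s)) := by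
  intro X₀ X₁ T hT
  exact KalmanAux.controllable A B hK X₀ X₁ hT
end

section
/- (Kalman condition, necessity) If the linear system Ẋ = AX + Bu with unconstrained controls is controllable, then the Kalman matrix C = (B | AB | ⋯ | A^{n-1}B) has rank n. -/
open MeasureTheory Matrix intervalIntegral

attribute [local instance] Matrix.linftyOpNormedAddCommGroup Matrix.linftyOpNormedRing
  Matrix.linftyOpNormedAlgebra

/-- Cayley–Hamilton in explicit form. -/
lemma pow_card_eq_sum (n : ℕ) (A : Matrix (Fin n) (Fin n) ℝ) :
    A ^ n = ∑ i ∈ Finset.range n, (-(A.charpoly.coeff i)) • A ^ i := by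
  have h := A.aeval_self_charpoly
  have hd : A.charpoly.natDegree = n := by
    simpa using A.charpoly_natDegree_eq_dim
  rw [Polynomial.aeval_eq_sum_range, hd, Finset.sum_range_succ] at h
  have hc : A.charpoly.coeff n = 1 := by
    have := A.charpoly_monic
    rw [Polynomial.Monic, Polynomial.leadingCoeff, hd] at this
    exact this
  rw [hc, one_smul] at h
  have : A ^ n = -(∑ i ∈ Finset.range n, A.charpoly.coeff i • A ^ i) := by
    linear_combination (norm := abel) h
  rw [this, ← Finset.sum_neg_distrib]
  exact Finset.sum_congr rfl fun i _ => (neg_smul _ _).symm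

lemma vecMul_sum' {n m : ℕ} {ι : Type*} (s : Finset ι)
    (f : ι → Matrix (Fin n) (Fin m) ℝ) (φ : Fin n → ℝ) :
    φ ᵥ* (∑ i ∈ s, f i) = ∑ i ∈ s, φ ᵥ* f i := by
  classical
  induction s using Finset.induction_on with
  | empty => simp
  | insert _ _ h ih => rw [Finset.sum_insert h, Finset.sum_insert h, Matrix.vecMul_add, ih]

lemma vecMul_smul' {n m : ℕ} (c : ℝ) (M : Matrix (Fin n) (Fin m) ℝ) (φ : Fin n → ℝ) :
    φ ᵥ* (c • M) = c • (φ ᵥ* M) := by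
  funext j
  simp [Matrix.vecMul, dotProduct, Finset.mul_sum, mul_left_comm]

lemma vecMul_pow_mul_eq_zero {n m : ℕ} {A : Matrix (Fin n) (Fin n) ℝ}
    {B : Matrix (Fin n) (Fin m) ℝ} {φ : Fin n → ℝ}
    (h : ∀ k < n, φ ᵥ* (A ^ k * B) = 0) (k : ℕ) :
    φ ᵥ* (A ^ k * B) = 0 := by
  induction k using Nat.strong_induction_on with
  | _ k ih =>
    rcases lt_or_ge k n with hk | hk
    · exact h k hk
    · obtain ⟨j, rfl⟩ : ∃ j, k = j + n := ⟨k - n, (Nat.sub_add_cancel hk).symm⟩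
      rcases Nat.eq_zero_or_pos n with h0 | hn0
      · subst h0
        funext i
        simp [Matrix.vecMul, dotProduct]
      calc φ ᵥ* (A ^ (j + n) * B)
          = φ ᵥ* ((A ^ j * A ^ n) * B) := by rw [pow_add]
        _ = ∑ i ∈ Finset.range n,
              (-(A.charpoly.coeff i)) • (φ ᵥ* (A ^ (j + i) * B)) := by
            rw [pow_card_eq_sum n A, Finset.mul_sum, Matrix.sum_mul, vecMul_sum']
            refine Finset.sum_congr rfl fun i _ => ?_
            rw [Matrix.mul_smul, Matrix.smul_mul, vecMul_smul', pow_add]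
        _ = 0 := by
            refine Finset.sum_eq_zero fun i hi => ?_
            have hi' := Finset.mem_range.mp hi
            rw [ih (j + i) (by omega), smul_zero]

lemma vecMul_exp_mul_eq_zero {n m : ℕ} {A : Matrix (Fin n) (Fin n) ℝ}
    {B : Matrix (Fin n) (Fin m) ℝ} {φ : Fin n → ℝ}
    (h : ∀ k, φ ᵥ* (A ^ k * B) = 0) (t : ℝ) :
    φ ᵥ* (NormedSpace.exp (t • A) * B) = 0 := by
  classical
  let L0 : Matrix (Fin n) (Fin n) ℝ →ₗ[ℝ] (Fin m → ℝ) :=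
    { toFun := fun M => φ ᵥ* (M * B)
      map_add' := fun M N => by
        show φ ᵥ* ((M + N) * B) = φ ᵥ* (M * B) + φ ᵥ* (N * B)
        rw [Matrix.add_mul, Matrix.vecMul_add]
      map_smul' := fun c M => by
        show φ ᵥ* ((c • M) * B) = c • (φ ᵥ* (M * B))
        rw [Matrix.smul_mul, vecMul_smul'] }
  let L := LinearMap.toContinuousLinearMap L0
  have hsum : Summable fun k : ℕ => (k.factorial : ℝ)⁻¹ • (t • A) ^ k :=
    NormedSpace.expSeries_summable' (𝕂 := ℝ) (t • A)
  have hL : φ ᵥ* (NormedSpace.exp (t • A) * B) = L (NormedSpace.exp (t • A)) := rfl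
  have hterm : ∀ k : ℕ, L ((k.factorial : ℝ)⁻¹ • (t • A) ^ k) = 0 := by
    intro k
    have hLk : L (A ^ k) = φ ᵥ* (A ^ k * B) := rfl
    rw [_root_.map_smul, smul_pow, _root_.map_smul, hLk, h k, smul_zero, smul_zero]
  rw [hL, NormedSpace.exp_eq_tsum (𝕂 := ℝ), L.map_tsum hsum]
  simp [hterm]

/-- Kalman condition, necessity: if the linear system `Ẋ = AX + Bu` with unconstrained
controls is controllable, then the Kalman matrix has rank `n`. -/
theorem stmt7 (n m : ℕ) (A : Matrix (Fin n) (Fin n) ℝ) (B : Matrix (Fin n) (Fin m) ℝ)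
    (hctrl : ∀ X₀ X₁ : Fin n → ℝ, ∃ T : ℝ, 0 < T ∧
      ∃ u : ℝ → Fin m → ℝ,
        IntervalIntegrable
          (fun s => (NormedSpace.exp ((T - s) • A)).mulVec (B.mulVec (u s))) volume 0 T ∧
        X₁ = (NormedSpace.exp (T • A)).mulVec X₀ +
          ∫ s in (0:ℝ)..T, (NormedSpace.exp ((T - s) • A)).mulVec (B.mulVec (u s))) :
    (kalmanMatrix n m A B).rank = n := by
  classical
  have key : ∀ φ : Fin n → ℝ, φ ᵥ* kalmanMatrix n m A B = 0 → φ = 0 := by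
    intro φ hφ
    have hlt : ∀ k < n, φ ᵥ* (A ^ k * B) = 0 := by
      intro k hk
      funext j
      have := congrFun hφ (⟨k, hk⟩, j)
      simpa [kalmanMatrix, Matrix.vecMul, dotProduct] using this
    have hall := vecMul_pow_mul_eq_zero hlt
    have hexp := vecMul_exp_mul_eq_zero hall
    obtain ⟨T, hT, u, hint, heq⟩ := hctrl 0 φ
    let D0 : (Fin n → ℝ) →ₗ[ℝ] ℝ :=
      { toFun := fun v => φ ⬝ᵥ v
        map_add' := fun v w => dotProduct_add _ _ _
        map_smul' := fun c v => by
          simp [dotProduct_smul] }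
    let D := LinearMap.toContinuousLinearMap D0
    have hDval : ∀ s : ℝ,
        D ((NormedSpace.exp ((T - s) • A)).mulVec (B.mulVec (u s))) = 0 := by
      intro s
      show φ ⬝ᵥ (NormedSpace.exp ((T - s) • A)).mulVec (B.mulVec (u s)) = 0
      rw [Matrix.dotProduct_mulVec, Matrix.dotProduct_mulVec, Matrix.vecMul_vecMul,
        hexp (T - s), zero_dotProduct]
    have h1 : φ ⬝ᵥ φ = 0 := by
      have : D φ = 0 := by
        rw [heq]
        have h2 : D ((NormedSpace.exp (T • A)).mulVec 0 +
            ∫ s in (0:ℝ)..T, (NormedSpace.exp ((T - s) • A)).mulVec (B.mulVec (u s)))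
            = D (∫ s in (0:ℝ)..T,
                (NormedSpace.exp ((T - s) • A)).mulVec (B.mulVec (u s))) := by
          rw [Matrix.mulVec_zero, zero_add]
        rw [h2, ← D.intervalIntegral_comp_comm hint]
        simp only [hDval]
        simp
      exact this
    exact dotProduct_self_eq_zero.mp h1
  rw [← Matrix.rank_transpose]
  have hinj : Function.Injective (kalmanMatrix n m A B)ᵀ.mulVecLin :=
    (injective_iff_map_eq_zero _).mpr fun φ hφ =>
      key φ (by rwa [Matrix.mulVecLin_apply, Matrix.mulVec_transpose] at hφ)
  rw [Matrix.rank, LinearMap.finrank_range_of_inj hinj]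
  simp
end

section
/- If T is the minimum time to reach X₁ from X₀ for the linear control system (i.e., X₁ ∈ A(X₀,T) and X₁ ∉ A(X₀,t) for all 0 < t < T), then X₁ lies on the boundary of the accessible set A(X₀,T), i.e., X₁ ∉ int A(X₀,T), given that the map t ↦ A(X₀,t) varies continuously (in Hausdorff distance) in t. -/
open Metric

/-- If `T` is the minimum time to reach `X₁` (so `X₁ ∈ A(X₀,T)` but `X₁ ∉ A(X₀,t)`
for `0 < t < T`), the accessible sets being nonempty, compact, convex and varying
continuously in Hausdorff distance, then `X₁` lies on the boundary of `A(X₀,T)`,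
i.e. `X₁ ∉ int A(X₀,T)`. -/
theorem stmt9 (n : ℕ) (Acc : ℝ → Set (Fin n → ℝ)) (X₁ : Fin n → ℝ) (T : ℝ) (hT : 0 < T)
    (hcomp : ∀ t, IsCompact (Acc t)) (hconv : ∀ t, Convex ℝ (Acc t))
    (hne : ∀ t, (Acc t).Nonempty)
    (hcont : ∀ ε > (0:ℝ), ∃ δ > (0:ℝ), ∀ t : ℝ,
      |t - T| < δ → Metric.hausdorffDist (Acc t) (Acc T) < ε)
    (hmem : X₁ ∈ Acc T) (hmin : ∀ t : ℝ, 0 < t → t < T → X₁ ∉ Acc t) :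
    X₁ ∉ interior (Acc T) := by
  intro hint
  -- get a ball around X₁ inside Acc T
  obtain ⟨r, hr, hball⟩ := Metric.isOpen_iff.1 isOpen_interior X₁ hint
  have hball' : ball X₁ r ⊆ Acc T := hball.trans interior_subset
  -- continuity: choose δ for ε = r/4
  obtain ⟨δ, hδ, hδ'⟩ := hcont (r / 4) (by positivity)
  set t : ℝ := max (T / 2) (T - δ / 2) with ht_def
  have ht0 : 0 < t := lt_of_lt_of_le (by linarith) (le_max_left _ _)
  have htT : t < T := max_lt (by linarith) (by linarith)
  have htδ : |t - T| < δ := by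
    rw [abs_sub_lt_iff]
    constructor
    · linarith
    · have : T - δ / 2 ≤ t := le_max_right _ _
      linarith
  have hHd : hausdorffDist (Acc t) (Acc T) < r / 4 := hδ' t htδ
  have hX : X₁ ∉ Acc t := hmin t ht0 htT
  -- separate X₁ from the compact convex set Acc t
  obtain ⟨f, u, hfu, huf⟩ :=
    geometric_hahn_banach_closed_point (hconv t) (hcomp t).isClosed hX
  have hf0 : f ≠ 0 := by
    intro h
    obtain ⟨a, ha⟩ := hne t
    have h1 := hfu a ha
    rw [h] at h1 huf
    simp at h1 huf
    linarith
  have hfn : 0 < ‖f‖ := norm_pos_iff.2 hf0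
  obtain ⟨x, hx1, hxf⟩ := f.exists_lt_apply_of_lt_opNorm (show ‖f‖ / 2 < ‖f‖ by linarith)
  -- normalize sign
  set v : Fin n → ℝ := if 0 ≤ f x then x else -x with hv_def
  have hv1 : ‖v‖ < 1 := by
    rw [hv_def]; split <;> simpa using hx1
  have hvf : ‖f‖ / 2 < f v := by
    rw [Real.norm_eq_abs] at hxf
    rw [hv_def]
    split_ifs with h
    · rwa [abs_of_nonneg h] at hxf
    · rw [map_neg]
      rw [abs_of_neg (not_le.1 h)] at hxf
      linarith
  -- the test point
  set z : Fin n → ℝ := X₁ + (r / 2) • v with hz_def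
  have hzT : z ∈ Acc T := by
    apply hball'
    rw [mem_ball, hz_def, dist_eq_norm]
    have : X₁ + (r / 2) • v - X₁ = (r / 2) • v := by abel
    rw [this, norm_smul]
    rw [Real.norm_eq_abs, abs_of_nonneg (by positivity : (0:ℝ) ≤ r / 2)]
    nlinarith [norm_nonneg v]
  -- every point of Acc t is far from z
  have hfar : ∀ a ∈ Acc t, r / 4 < dist z a := by
    intro a ha
    have h1 : f a < u := hfu a ha
    have h2 : f z = f X₁ + (r / 2) * f v := by
      rw [hz_def, map_add, map_smul, smul_eq_mul]
    have h3 : r / 2 * (‖f‖ / 2) < f z - f a := by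
      have : (r / 2) * (‖f‖ / 2) < (r / 2) * f v := by
        apply mul_lt_mul_of_pos_left hvf (by positivity)
      nlinarith
    have h4 : f z - f a ≤ ‖f‖ * ‖z - a‖ := by
      calc f z - f a = f (z - a) := by rw [map_sub]
        _ ≤ |f (z - a)| := le_abs_self _
        _ ≤ ‖f‖ * ‖z - a‖ := f.le_opNorm _
    rw [dist_eq_norm]
    nlinarith
  -- but z ∈ Acc T is within hausdorffDist of Acc t
  have hfin : EMetric.hausdorffEdist (Acc T) (Acc t) ≠ ⊤ :=
    hausdorffEdist_ne_top_of_nonempty_of_bounded (hne T) (hne t)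
      (hcomp T).isBounded (hcomp t).isBounded
  have hle : infDist z (Acc t) ≤ hausdorffDist (Acc T) (Acc t) :=
    infDist_le_hausdorffDist_of_mem hzT hfin
  have hsymm : hausdorffDist (Acc T) (Acc t) = hausdorffDist (Acc t) (Acc T) :=
    hausdorffDist_comm
  have hlt : infDist z (Acc t) < r / 4 := lt_of_le_of_lt (hle.trans_eq hsymm) hHd
  obtain ⟨y, hy, hdy⟩ := (infDist_lt_iff (hne t)).1 hlt
  have := hfar y hy
  linarith
end
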